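/- For every s ∈ S and w ∈ W̃: if ℓ(sw) = ℓ(w) + 1 then the set product IsIwI equals IswI, while if ℓ(sw) = ℓ(w) − 1 then IsIwI equals the disjoint union of IwI and IswI. -/

import Mathlib

open scoped Pointwise

/-! ## Setting

`G` is a group with subgroups `I` and `N` such that `T := I ⊓ N` is normal in `N`, and
`W̃ := N/T` is presented via a surjective homomorphism `π : N →* W̃` whose kernel consists of
the elements of `N` lying in `I`.  `W̃ = W_aff ⋊ Ω` is an internal semidirect product, where
`W_aff` carries a Coxeter system `cs` (with simple reflections indexed by `B`), the length
function `ℓ` of `cs` is extended to `W̃` by `ℓ (w * u) = ℓ w` for `w ∈ W_aff`, `u ∈ Ω`, and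
the axioms (T0), (T3), (T4), (TΩ), (TS), (TF) hold. -/

/-- The double coset `I·n·I ⊆ G` attached to an element `w ∈ W̃ = N/T`, described as the union
of `I·n·I` over all representatives `n ∈ N` of `w` (these double cosets all coincide, since any
two representatives differ by an element of `T = I ⊓ N ⊆ I`). -/
def IwI {G : Type} [Group G] {W : Type} [Group W] (I : Subgroup G) {N : Subgroup G}
    (π : N →* W) (w : W) : Set G :=
  {g : G | ∃ n : N, π n = w ∧ ∃ i ∈ I, ∃ j ∈ I, g = i * (n : G) * j}

/-- The basis element `i_w = 1_{IwI} : G → ℤ` of the Iwahori–Hecke ring. -/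
noncomputable def iw {G : Type} [Group G] {W : Type} [Group W] (I : Subgroup G) {N : Subgroup G}
    (π : N →* W) (w : W) : G → ℤ :=
  (IwI I π w).indicator fun _ => (1 : ℤ)

/-- Convolution of `ℤ`-valued functions on `G` relative to `I`:
`(f ⋆ f')(x) = Σ_{yI ∈ G/I} f(y)·f'(y⁻¹x)` (the value of `f` at a left coset `yI` is computed
at a chosen representative; this is independent of the choices when `f` is right `I`-invariant
and `f'` is left `I`-invariant). -/
noncomputable def hconv {G : Type} [Group G] (I : Subgroup G) (f f' : G → ℤ) : G → ℤ :=
  fun x => ∑ᶠ y : G ⧸ I, f (Quotient.out y) * f' ((Quotient.out y)⁻¹ * x)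

/-- The left cosets of `I` contained in a (right `I`-stable) subset `A ⊆ G`, viewed as the
image of `A` in `G/I`. -/
def leftCosetsIn {G : Type} [Group G] (I : Subgroup G) (A : Set G) : Set (G ⧸ I) :=
  QuotientGroup.mk '' A

/-- A function `f : G → ℤ` belongs to the Iwahori–Hecke ring `H(G,I)` iff it is left and right
`I`-invariant and vanishes outside finitely many double cosets of `I`. -/
def IsHeckeElt {G : Type} [Group G] {W : Type} [Group W] (I : Subgroup G) {N : Subgroup G}
    (π : N →* W) (f : G → ℤ) : Prop :=
  (∀ i ∈ I, ∀ g : G, f (i * g) = f g) ∧ (∀ i ∈ I, ∀ g : G, f (g * i) = f g) ∧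
    {w : W | ∃ g ∈ IwI I π w, f g ≠ 0}.Finite

/-- The data and axioms of the Iwahori–Matsumoto setting. -/
structure IwahoriHeckeSetup (G W B : Type) [Group G] [Group W] (M : CoxeterMatrix B) where
  /-- the "Iwahori" subgroup -/
  I : Subgroup G
  /-- the subgroup `N` -/
  N : Subgroup G
  /-- the quotient map `N → W̃ = N/T`, `T = I ∩ N` -/
  π : N →* W
  π_surjective : Function.Surjective π
  /-- the kernel of `π` is exactly `T = I ∩ N` (so `T` is normal in `N` and `W̃ = N/T`) -/
  π_ker : ∀ n : N, π n = 1 ↔ (n : G) ∈ I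
  /-- the normal subgroup `W_aff` of `W̃` -/
  Waff : Subgroup W
  /-- the subgroup `Ω` of `W̃` -/
  Om : Subgroup W
  Waff_normal : Waff.Normal
  /-- `W̃ = W_aff · Ω` -/
  sd_prod : ∀ w : W, ∃ wa ∈ Waff, ∃ u ∈ Om, w = wa * u
  /-- `W_aff ∩ Ω = 1` -/
  sd_disj : Waff ⊓ Om = ⊥
  /-- the Coxeter system `(W_aff, S)`, `S = {simple b | b : B}` -/
  cs : CoxeterSystem M Waff
  /-- the length function of `(W_aff, S)`, extended to `W̃` -/
  len : W → ℕ
  len_spec : ∀ (wa : Waff) (u : Om), len ((wa : W) * (u : W)) = cs.length wa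
  /-- `q w` = the number of left cosets of `I` contained in `IwI` -/
  q : W → ℕ
  /-- (T0): `G` is covered by the double cosets `IwI`, `w ∈ W̃` ... -/
  T0_cover : ∀ g : G, ∃ w : W, g ∈ IwI I π w
  /-- (T0): ... and distinct double cosets are disjoint -/
  T0_disjoint : ∀ w w' : W, w ≠ w' → Disjoint (IwI I π w) (IwI I π w')
  /-- (T3): `sIw ⊆ IwI ∪ IswI` for all `s ∈ S`, `w ∈ W̃` -/
  T3 : ∀ (b : B) (w : W) (ns nw : N), π ns = (cs.simple b : W) → π nw = w →
      ∀ i ∈ I, (ns : G) * i * (nw : G) ∈ IwI I π w ∪ IwI I π ((cs.simple b : W) * w)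
  /-- (T4): `sIs ⊄ I` for all `s ∈ S` -/
  T4 : ∀ (b : B) (ns ns' : N), π ns = (cs.simple b : W) → π ns' = (cs.simple b : W) →
      ¬ (∀ i ∈ I, (ns : G) * i * (ns' : G) ∈ I)
  /-- (TΩ): representatives in `N` of elements of `Ω` normalize `I` -/
  TOm : ∀ n : N, π n ∈ Om → ∀ i ∈ I, (n : G) * i * (n : G)⁻¹ ∈ I
  /-- (TS): `uSu⁻¹ = S` for all `u ∈ Ω` -/
  TS : ∀ u ∈ Om, ∀ b : B, ∃ b' : B, u * (cs.simple b : W) * u⁻¹ = (cs.simple b' : W)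
  /-- (TF): every double coset `IwI` is a finite union of left cosets of `I`, and `q w` is
  their number -/
  TF : ∀ w : W, (leftCosetsIn I (IwI I π w)).Finite ∧
      q w = (leftCosetsIn I (IwI I π w)).ncard


section Aux
variable {G W : Type} [Group G] [Group W] {I : Subgroup G} {N : Subgroup G} (π : N →* W)

/-- representative swap -/
lemma mem_IwI_iff_rep (hker : ∀ n : N, π n = 1 ↔ (n : G) ∈ I) {w : W} {n : N} (hn : π n = w)
    {g : G} : g ∈ IwI I π w ↔ ∃ i ∈ I, ∃ j ∈ I, g = i * (n : G) * j := by
  constructor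
  · rintro ⟨m, hm, i, hi, j, hj, rfl⟩
    refine ⟨i, hi, ((n⁻¹ * m : N) : G) * j, I.mul_mem ?_ hj, ?_⟩
    · exact (hker _).mp (by simp [map_mul, hn, hm])
    · push_cast
      group
  · rintro ⟨i, hi, j, hj, rfl⟩
    exact ⟨n, hn, i, hi, j, hj, rfl⟩

lemma mem_IwI_self (n : N) : (n : G) ∈ IwI I π (π n) :=
  ⟨n, rfl, 1, I.one_mem, 1, I.one_mem, by group⟩

lemma IwI_nonempty (hsurj : Function.Surjective π) (w : W) : (IwI I π w).Nonempty := by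
  obtain ⟨n, rfl⟩ := hsurj w
  exact ⟨n, mem_IwI_self π n⟩

lemma IwI_mul_left {w : W} {i g : G} (hi : i ∈ I) (hg : g ∈ IwI I π w) : i * g ∈ IwI I π w := by
  obtain ⟨n, hn, a, ha, b, hb, rfl⟩ := hg
  exact ⟨n, hn, i * a, I.mul_mem hi ha, b, hb, by group⟩

lemma IwI_mul_right {w : W} {i g : G} (hi : i ∈ I) (hg : g ∈ IwI I π w) : g * i ∈ IwI I π w := by
  obtain ⟨n, hn, a, ha, b, hb, rfl⟩ := hg
  exact ⟨n, hn, a, ha, b * i, I.mul_mem hb hi, by group⟩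

/-- `I`-biinvariance -/
def Biinv (I : Subgroup G) (A : Set G) : Prop :=
  (∀ i ∈ I, ∀ a ∈ A, i * a ∈ A) ∧ (∀ i ∈ I, ∀ a ∈ A, a * i ∈ A)

lemma biinv_IwI (w : W) : Biinv I (IwI I π w) :=
  ⟨fun _ hi _ ha => IwI_mul_left π hi ha, fun _ hi _ ha => IwI_mul_right π hi ha⟩

lemma biinv_union {A B : Set G} (hA : Biinv I A) (hB : Biinv I B) : Biinv I (A ∪ B) := by
  constructor
  · rintro i hi a (ha | ha)
    exacts [Or.inl (hA.1 i hi a ha), Or.inr (hB.1 i hi a ha)]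
  · rintro i hi a (ha | ha)
    exacts [Or.inl (hA.2 i hi a ha), Or.inr (hB.2 i hi a ha)]

lemma biinv_mul {A B : Set G} (hA : Biinv I A) (hB : Biinv I B) : Biinv I (A * B) := by
  constructor
  · rintro i hi x hx
    obtain ⟨a, ha, b, hb, rfl⟩ := Set.mem_mul.mp hx
    exact Set.mem_mul.mpr ⟨i * a, hA.1 i hi a ha, b, hb, by group⟩
  · rintro i hi x hx
    obtain ⟨a, ha, b, hb, rfl⟩ := Set.mem_mul.mp hx
    exact Set.mem_mul.mpr ⟨a, ha, b * i, hB.2 i hi b hb, by group⟩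

/-- a biinvariant set meeting `IwI` contains it -/
lemma IwI_subset_of_mem (hker : ∀ n : N, π n = 1 ↔ (n : G) ∈ I) {A : Set G} (hA : Biinv I A)
    {v : W} {x : G} (hx : x ∈ IwI I π v) (hxA : x ∈ A) : IwI I π v ⊆ A := by
  obtain ⟨n, hn, i, hi, j, hj, rfl⟩ := hx
  have hnA : (n : G) ∈ A := by
    have h1 : i⁻¹ * (i * (n : G) * j) ∈ A := hA.1 i⁻¹ (I.inv_mem hi) _ hxA
    have h2 : (i⁻¹ * (i * (n : G) * j)) * j⁻¹ ∈ A := hA.2 j⁻¹ (I.inv_mem hj) _ h1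
    simpa [mul_assoc] using h2
  intro y hy
  obtain ⟨a, ha, b, hb, rfl⟩ := (mem_IwI_iff_rep π hker hn).mp hy
  exact hA.2 b hb _ (hA.1 a ha _ hnA)

lemma IwI_inv (v : W) : (IwI I π v)⁻¹ = IwI I π v⁻¹ := by
  ext x
  simp only [Set.mem_inv]
  constructor
  · rintro ⟨n, hn, i, hi, j, hj, hx⟩
    refine ⟨n⁻¹, by simp [hn], j⁻¹, I.inv_mem hj, i⁻¹, I.inv_mem hi, ?_⟩
    have : x = (i * (n : G) * j)⁻¹ := by rw [← hx]; group
    rw [this]; push_cast; group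
  · rintro ⟨n, hn, i, hi, j, hj, hx⟩
    refine ⟨n⁻¹, by simp [hn], j⁻¹, I.inv_mem hj, i⁻¹, I.inv_mem hi, ?_⟩
    rw [hx]; push_cast; group

lemma IwI_one (hker : ∀ n : N, π n = 1 ↔ (n : G) ∈ I) : IwI I π (1 : W) = (I : Set G) := by
  ext g
  constructor
  · rintro ⟨n, hn, i, hi, j, hj, rfl⟩
    exact I.mul_mem (I.mul_mem hi ((hker n).mp hn)) hj
  · intro hg
    exact ⟨1, by simp, g, hg, 1, I.one_mem, by simp⟩

lemma IwI_mul_subset_of_mul (hker : ∀ n : N, π n = 1 ↔ (n : G) ∈ I) (v v' : W)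
    {n n' : N} (hn : π n = v) (hn' : π n' = v') :
    IwI I π (v * v') ⊆ IwI I π v * IwI I π v' := by
  have hx : ((n * n' : N) : G) ∈ IwI I π v * IwI I π v' := by
    push_cast
    exact Set.mul_mem_mul (hn ▸ mem_IwI_self π n) (hn' ▸ mem_IwI_self π n')
  exact IwI_subset_of_mem π hker (biinv_mul (biinv_IwI π v) (biinv_IwI π v'))
    (by simpa [map_mul, hn, hn'] using mem_IwI_self π (n * n')) hx

lemma IwI_mul_I (v : W) :
    IwI I π v * (I : Set G) = IwI I π v := by
  ext x
  constructor
  · rintro hx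
    obtain ⟨a, ha, b, hb, rfl⟩ := Set.mem_mul.mp hx
    exact IwI_mul_right π hb ha
  · intro hx
    simpa using Set.mul_mem_mul hx I.one_mem

lemma I_mul_IwI (v : W) :
    (I : Set G) * IwI I π v = IwI I π v := by
  ext x
  constructor
  · rintro hx
    obtain ⟨a, ha, b, hb, rfl⟩ := Set.mem_mul.mp hx
    exact IwI_mul_left π ha hb
  · intro hx
    simpa using Set.mul_mem_mul I.one_mem hx

end Aux
namespace IwahoriHeckeSetup
variable {G W B : Type} [Group G] [Group W] {M : CoxeterMatrix B} (D : IwahoriHeckeSetup G W B M)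

lemma eq_of_mem_mem {v v' : W} {x : G} (h : x ∈ IwI D.I D.π v) (h' : x ∈ IwI D.I D.π v') :
    v = v' := by
  by_contra hne
  exact Set.disjoint_left.mp (D.T0_disjoint v v' hne) h h'

lemma simple_coe_mul_self (b : B) : (D.cs.simple b : W) * (D.cs.simple b : W) = 1 := by
  rw [← Subgroup.coe_mul, D.cs.simple_mul_simple_self b, Subgroup.coe_one]

lemma simple_coe_inv (b : B) : (D.cs.simple b : W)⁻¹ = (D.cs.simple b : W) :=
  inv_eq_of_mul_eq_one_right (D.simple_coe_mul_self b)

lemma mulC_subset (b : B) (w : W) :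
    IwI D.I D.π (D.cs.simple b : W) * IwI D.I D.π w ⊆
      IwI D.I D.π w ∪ IwI D.I D.π ((D.cs.simple b : W) * w) := by
  rintro x hx
  obtain ⟨a, ha, c, hc, rfl⟩ := Set.mem_mul.mp hx
  obtain ⟨ns, hns, i1, hi1, j1, hj1, rfl⟩ := ha
  obtain ⟨nw, hnw, i2, hi2, j2, hj2, rfl⟩ := hc
  have hmid := D.T3 b w ns nw hns hnw (j1 * i2) (D.I.mul_mem hj1 hi2)
  have heq : (i1 * (ns : G) * j1) * (i2 * (nw : G) * j2)
      = i1 * ((ns : G) * (j1 * i2) * (nw : G)) * j2 := by group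
  rw [heq]
  rcases hmid with h | h
  · exact Or.inl (IwI_mul_right _ hj2 (IwI_mul_left _ hi1 h))
  · exact Or.inr (IwI_mul_right _ hj2 (IwI_mul_left _ hi1 h))

lemma mem_IwI_inv_iff {v : W} {x : G} : x ∈ IwI D.I D.π v⁻¹ ↔ x⁻¹ ∈ IwI D.I D.π v := by
  rw [← IwI_inv]
  exact Set.mem_inv

lemma Cmul_subset (b : B) (w : W) :
    IwI D.I D.π w * IwI D.I D.π (D.cs.simple b : W) ⊆
      IwI D.I D.π w ∪ IwI D.I D.π (w * (D.cs.simple b : W)) := by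
  intro x hx
  have hxinv : x⁻¹ ∈ IwI D.I D.π (D.cs.simple b : W) * IwI D.I D.π w⁻¹ := by
    have h1 : x⁻¹ ∈ (IwI D.I D.π w * IwI D.I D.π (D.cs.simple b : W))⁻¹ :=
      Set.inv_mem_inv.mpr hx
    rwa [mul_inv_rev, IwI_inv, IwI_inv, D.simple_coe_inv] at h1
  rcases D.mulC_subset b w⁻¹ hxinv with h | h
  · left
    have := D.mem_IwI_inv_iff.mpr h
    simpa using this
  · right
    have h2 : x⁻¹ ∈ IwI D.I D.π (w * (D.cs.simple b : W))⁻¹ := by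
      rwa [mul_inv_rev, D.simple_coe_inv]
    have := D.mem_IwI_inv_iff.mpr h2
    simpa using this

lemma om_mul {u : W} (hu : u ∈ D.Om) (w' : W) :
    IwI D.I D.π u * IwI D.I D.π w' = IwI D.I D.π (u * w') := by
  apply Set.Subset.antisymm
  · rintro x hx
    obtain ⟨a, ha, c, hc, rfl⟩ := Set.mem_mul.mp hx
    obtain ⟨nu, hnu, i1, hi1, j1, hj1, rfl⟩ := ha
    obtain ⟨nw, hnw, i2, hi2, j2, hj2, rfl⟩ := hc
    have hj : (nu : G) * (j1 * i2) * (nu : G)⁻¹ ∈ D.I :=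
      D.TOm nu (hnu ▸ hu) _ (D.I.mul_mem hj1 hi2)
    refine ⟨nu * nw, by simp [map_mul, hnu, hnw], i1 * ((nu : G) * (j1 * i2) * (nu : G)⁻¹),
      D.I.mul_mem hi1 hj, j2, hj2, ?_⟩
    push_cast
    group
  · obtain ⟨nu, hnu⟩ := D.π_surjective u
    obtain ⟨nw, hnw⟩ := D.π_surjective w'
    exact IwI_mul_subset_of_mul D.π D.π_ker u w' hnu hnw

lemma CsCs (b : B) :
    IwI D.I D.π (D.cs.simple b : W) * IwI D.I D.π (D.cs.simple b : W) =
      (D.I : Set G) ∪ IwI D.I D.π (D.cs.simple b : W) := by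
  obtain ⟨ns, hns⟩ := D.π_surjective (D.cs.simple b : W)
  have hbi : Biinv D.I (IwI D.I D.π (D.cs.simple b : W) * IwI D.I D.π (D.cs.simple b : W)) :=
    biinv_mul (biinv_IwI _ _) (biinv_IwI _ _)
  apply Set.Subset.antisymm
  · intro x hx
    rcases D.mulC_subset b (D.cs.simple b : W) hx with h | h
    · exact Or.inr h
    · rw [D.simple_coe_mul_self, IwI_one D.π D.π_ker] at h
      exact Or.inl h
  · have hIsub : (D.I : Set G) ⊆
        IwI D.I D.π (D.cs.simple b : W) * IwI D.I D.π (D.cs.simple b : W) := by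
      have h1 : (1 : G) ∈ IwI D.I D.π (D.cs.simple b : W) * IwI D.I D.π (D.cs.simple b : W) := by
        have hns' : D.π ns⁻¹ = (D.cs.simple b : W) := by
          rw [map_inv, hns, D.simple_coe_inv]
        have := Set.mul_mem_mul (hns ▸ mem_IwI_self (I := D.I) D.π ns)
          (hns' ▸ mem_IwI_self (I := D.I) D.π ns⁻¹)
        simpa using this
      rw [← IwI_one D.π D.π_ker]
      exact IwI_subset_of_mem D.π D.π_ker hbi
        (by rw [IwI_one D.π D.π_ker]; exact D.I.one_mem) h1
    have hssub : IwI D.I D.π (D.cs.simple b : W) ⊆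
        IwI D.I D.π (D.cs.simple b : W) * IwI D.I D.π (D.cs.simple b : W) := by
      have hT4 := D.T4 b ns ns hns hns
      push_neg at hT4
      obtain ⟨i, hi, hni⟩ := hT4
      have hyA : (ns : G) * i * (ns : G) ∈
          IwI D.I D.π (D.cs.simple b : W) * IwI D.I D.π (D.cs.simple b : W) := by
        have := Set.mul_mem_mul (hns ▸ mem_IwI_self (I := D.I) D.π ns)
          (IwI_mul_left D.π hi (hns ▸ mem_IwI_self (I := D.I) D.π ns))
        simpa [mul_assoc] using this
      have hy : (ns : G) * i * (ns : G) ∈ IwI D.I D.π (D.cs.simple b : W) := by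
        rcases D.T3 b (D.cs.simple b : W) ns ns hns hns i hi with h | h
        · exact h
        · rw [D.simple_coe_mul_self, IwI_one D.π D.π_ker] at h
          exact absurd h hni
      exact IwI_subset_of_mem D.π D.π_ker hbi hy hyA
    intro x hx
    rcases hx with h | h
    · exact hIsub h
    · exact hssub h

lemma len_decomp (w : W) : ∃ (wa : D.Waff) (u : D.Om),
    w = (wa : W) * (u : W) ∧ D.len w = D.cs.length wa := by
  obtain ⟨wa, hwa, u, hu, hw⟩ := D.sd_prod w
  exact ⟨⟨wa, hwa⟩, ⟨u, hu⟩, hw, by rw [hw]; exact D.len_spec ⟨wa, hwa⟩ ⟨u, hu⟩⟩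

lemma len_simple_mul (b : B) (w : W) :
    D.len ((D.cs.simple b : W) * w) = D.len w + 1 ∨
      D.len ((D.cs.simple b : W) * w) + 1 = D.len w := by
  obtain ⟨wa, u, rfl, hlen⟩ := D.len_decomp w
  have h1 : (D.cs.simple b : W) * ((wa : W) * (u : W))
      = ((D.cs.simple b * wa : D.Waff) : W) * (u : W) := by push_cast; group
  rw [h1, D.len_spec, hlen]
  exact D.cs.length_simple_mul wa b

lemma len_mul_simple (b : B) (w : W) :
    D.len (w * (D.cs.simple b : W)) = D.len w + 1 ∨
      D.len (w * (D.cs.simple b : W)) + 1 = D.len w := by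
  obtain ⟨wa, u, rfl, hlen⟩ := D.len_decomp w
  obtain ⟨b', hb'⟩ := D.TS (u : W) u.2 b
  have h1 : (wa : W) * (u : W) * (D.cs.simple b : W)
      = ((wa * D.cs.simple b' : D.Waff) : W) * (u : W) := by
    push_cast
    rw [← hb']
    group
  rw [h1, D.len_spec, hlen]
  exact D.cs.length_mul_simple wa b'

lemma length_conj_le {u : W} (hu : u ∈ D.Om) (x y : D.Waff)
    (h : (y : W) = u * (x : W) * u⁻¹) : D.cs.length y ≤ D.cs.length x := by
  obtain ⟨ω, hω, hx⟩ := D.cs.exists_reduced_word x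
  suffices h' : ∀ ω : List B, ∃ ω' : List B, ω'.length = ω.length ∧
      ((D.cs.wordProd ω' : D.Waff) : W) = u * ((D.cs.wordProd ω : D.Waff) : W) * u⁻¹ by
    obtain ⟨ω', hlen', heq⟩ := h' ω
    have hyw : y = D.cs.wordProd ω' := by
      have hcoe : (y : W) = ((D.cs.wordProd ω' : D.Waff) : W) := by rw [heq, h, hx]
      exact Subtype.coe_injective hcoe
    rw [hyw]
    calc D.cs.length (D.cs.wordProd ω') ≤ ω'.length := D.cs.length_wordProd_le ω'
      _ = ω.length := hlen'
      _ = D.cs.length x := by rw [hx]; exact (hω : _ = _).symm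
  intro ω
  induction ω with
  | nil => exact ⟨[], rfl, by simp⟩
  | cons i ω ih =>
    obtain ⟨ω', hl, he⟩ := ih
    obtain ⟨i', hi'⟩ := D.TS u hu i
    refine ⟨i' :: ω', by simp [hl], ?_⟩
    rw [D.cs.wordProd_cons, D.cs.wordProd_cons]
    push_cast
    rw [← hi', he]
    group

lemma length_conj {u : W} (hu : u ∈ D.Om) (x y : D.Waff)
    (h : (y : W) = u * (x : W) * u⁻¹) : D.cs.length y = D.cs.length x := by
  refine le_antisymm (D.length_conj_le hu x y h) (D.length_conj_le (D.Om.inv_mem hu) y x ?_)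
  rw [h]
  group

lemma len_inv (w : W) : D.len w⁻¹ = D.len w := by
  obtain ⟨wa, u, rfl, hlen⟩ := D.len_decomp w
  have hy : (u : W)⁻¹ * (wa : W)⁻¹ * (u : W) ∈ D.Waff := by
    have := D.Waff_normal.conj_mem _ (D.Waff.inv_mem wa.2) (u : W)⁻¹
    simpa using this
  have h1 : ((wa : W) * (u : W))⁻¹ = ((⟨_, hy⟩ : D.Waff) : W) * ((u⁻¹ : D.Om) : W) := by
    push_cast
    group
  rw [h1, D.len_spec, hlen]
  have h2 : D.cs.length (⟨_, hy⟩ : D.Waff) = D.cs.length wa⁻¹ :=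
    D.length_conj (D.Om.inv_mem u.2) wa⁻¹ ⟨_, hy⟩ (by push_cast; group)
  rw [h2, D.cs.length_inv]

lemma om_of_len_zero {w : W} (h : D.len w = 0) : w ∈ D.Om := by
  obtain ⟨wa, u, rfl, hlen⟩ := D.len_decomp w
  rw [h] at hlen
  have hwa : wa = 1 := D.cs.length_eq_zero_iff.mp hlen.symm
  rw [hwa]
  simpa using u.2

end IwahoriHeckeSetup
namespace IwahoriHeckeSetup
variable {G W B : Type} [Group G] [Group W] {M : CoxeterMatrix B} (D : IwahoriHeckeSetup G W B M)

lemma prod_right : ∀ (n : ℕ) (w : W) (b : B), D.len w = n →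
    D.len (w * (D.cs.simple b : W)) = D.len w + 1 →
    IwI D.I D.π w * IwI D.I D.π (D.cs.simple b : W) = IwI D.I D.π (w * (D.cs.simple b : W)) := by
  intro n
  induction n using Nat.strong_induction_on with
  | _ n IH =>
    intro w b hw hws
    obtain ⟨ns, hns⟩ := D.π_surjective (D.cs.simple b : W)
    obtain ⟨nw, hnw⟩ := D.π_surjective w
    have hsup : IwI D.I D.π (w * (D.cs.simple b : W)) ⊆
        IwI D.I D.π w * IwI D.I D.π (D.cs.simple b : W) :=
      IwI_mul_subset_of_mul D.π D.π_ker w _ hnw hns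
    rcases Nat.eq_zero_or_pos n with hn0 | hpos
    · exact D.om_mul (D.om_of_len_zero (hw.trans hn0)) _
    · obtain ⟨wa, u, hdec, hlen⟩ := D.len_decomp w
      have hwa1 : wa ≠ 1 := by
        intro h1
        rw [h1, D.cs.length_one] at hlen
        omega
      obtain ⟨b₀, hb₀⟩ := D.cs.exists_leftDescent_of_ne_one hwa1
      set v : W := (D.cs.simple b₀ : W) * w with hv
      have htv : (D.cs.simple b₀ : W) * v = w := by
        rw [hv, ← mul_assoc, D.simple_coe_mul_self b₀, one_mul]
      have hvlen : D.len v + 1 = D.len w := by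
        have hv2 : v = ((D.cs.simple b₀ * wa : D.Waff) : W) * (u : W) := by
          rw [hv, hdec]; push_cast; group
        rw [hv2, D.len_spec, hlen]
        exact D.cs.isLeftDescent_iff.mp hb₀
      have hvs : D.len (v * (D.cs.simple b : W)) = D.len v + 1 := by
        rcases D.len_mul_simple b v with h | h
        · exact h
        · exfalso
          have h2 : D.len (w * (D.cs.simple b : W)) ≤ D.len (v * (D.cs.simple b : W)) + 1 := by
            have he : w * (D.cs.simple b : W) = (D.cs.simple b₀ : W) * (v * (D.cs.simple b : W)) := by
              rw [← htv]; group
            rw [he]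
            rcases D.len_simple_mul b₀ (v * (D.cs.simple b : W)) with h3 | h3 <;> omega
          omega
      have hIH : IwI D.I D.π v * IwI D.I D.π (D.cs.simple b : W) =
          IwI D.I D.π (v * (D.cs.simple b : W)) :=
        IH (D.len v) (by omega) v b rfl hvs
      have hCw_sub : IwI D.I D.π w ⊆ IwI D.I D.π (D.cs.simple b₀ : W) * IwI D.I D.π v := by
        obtain ⟨nt, hnt⟩ := D.π_surjective (D.cs.simple b₀ : W)
        obtain ⟨nv, hnv⟩ := D.π_surjective v
        have := IwI_mul_subset_of_mul D.π D.π_ker (D.cs.simple b₀ : W) v hnt hnv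
        rwa [htv] at this
      have hchain : IwI D.I D.π w * IwI D.I D.π (D.cs.simple b : W) ⊆
          IwI D.I D.π (v * (D.cs.simple b : W)) ∪ IwI D.I D.π (w * (D.cs.simple b : W)) := by
        intro x hx
        have h1 : x ∈ IwI D.I D.π (D.cs.simple b₀ : W) *
            (IwI D.I D.π v * IwI D.I D.π (D.cs.simple b : W)) := by
          rw [← mul_assoc]
          exact Set.mul_subset_mul hCw_sub (le_refl _) hx
        rw [hIH] at h1
        have h2 := D.mulC_subset b₀ (v * (D.cs.simple b : W)) h1
        rwa [show (D.cs.simple b₀ : W) * (v * (D.cs.simple b : W)) = w * (D.cs.simple b : W) by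
          rw [← htv]; group] at h2
      by_cases hmeet : ∃ x ∈ IwI D.I D.π w * IwI D.I D.π (D.cs.simple b : W),
          x ∈ IwI D.I D.π (v * (D.cs.simple b : W))
      · exfalso
        obtain ⟨x, hxA, hxv⟩ := hmeet
        have hmemws : ((nw * ns : D.N) : G) ∈ IwI D.I D.π (w * (D.cs.simple b : W)) := by
          have := mem_IwI_self (I := D.I) D.π (nw * ns)
          rwa [map_mul, hnw, hns] at this
        rcases D.Cmul_subset b w hxA with hxw | hxws
        · have heq : v * (D.cs.simple b : W) = w := D.eq_of_mem_mem hxv hxw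
          have hA : IwI D.I D.π w * IwI D.I D.π (D.cs.simple b : W) =
              IwI D.I D.π v ∪ IwI D.I D.π w := by
            conv_lhs => rw [← heq, ← hIH]
            rw [mul_assoc, D.CsCs b, Set.mul_union, IwI_mul_I D.π, hIH, heq]
          have hy : ((nw * ns : D.N) : G) ∈ IwI D.I D.π v ∪ IwI D.I D.π w := by
            rw [← hA]
            push_cast
            exact Set.mul_mem_mul (hnw ▸ mem_IwI_self (I := D.I) D.π nw)
              (hns ▸ mem_IwI_self (I := D.I) D.π ns)
          rcases hy with h | h
          · have he2 : w * (D.cs.simple b : W) = v := D.eq_of_mem_mem hmemws h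
            rw [← he2] at hvlen
            omega
          · have he2 : w * (D.cs.simple b : W) = w := D.eq_of_mem_mem hmemws h
            rw [he2] at hws
            omega
        · have heq : v * (D.cs.simple b : W) = w * (D.cs.simple b : W) :=
            D.eq_of_mem_mem hxv hxws
          have hvw : v = w := mul_right_cancel heq
          rw [hvw] at hvlen
          omega
      · push_neg at hmeet
        apply Set.Subset.antisymm
        · intro x hx
          rcases hchain hx with h | h
          · exact absurd h (hmeet x hx)
          · exact h
        · exact hsup

lemma prod_left (b : B) (w : W) (h : D.len ((D.cs.simple b : W) * w) = D.len w + 1) :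
    IwI D.I D.π (D.cs.simple b : W) * IwI D.I D.π w =
      IwI D.I D.π ((D.cs.simple b : W) * w) := by
  have h' : D.len (w⁻¹ * (D.cs.simple b : W)) = D.len w⁻¹ + 1 := by
    have e : w⁻¹ * (D.cs.simple b : W) = ((D.cs.simple b : W) * w)⁻¹ := by
      rw [mul_inv_rev, D.simple_coe_inv]
    rw [e, D.len_inv, D.len_inv, h]
  have hr := D.prod_right (D.len w⁻¹) w⁻¹ b rfl h'
  calc IwI D.I D.π (D.cs.simple b : W) * IwI D.I D.π w
      = (IwI D.I D.π w⁻¹ * IwI D.I D.π (D.cs.simple b : W))⁻¹ := by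
        rw [mul_inv_rev, IwI_inv, IwI_inv, inv_inv, D.simple_coe_inv]
    _ = (IwI D.I D.π (w⁻¹ * (D.cs.simple b : W)))⁻¹ := by rw [hr]
    _ = IwI D.I D.π ((D.cs.simple b : W) * w) := by
        rw [IwI_inv, mul_inv_rev, inv_inv, D.simple_coe_inv]

end IwahoriHeckeSetup

/-- For every simple reflection `s ∈ S` and `w ∈ W̃`: if `ℓ(sw) = ℓ(w) + 1` then the set
product `IsIwI (= IsI · IwI)` equals `IswI`, while if `ℓ(sw) = ℓ(w) − 1` then `IsIwI` is the
disjoint union of `IwI` and `IswI`. -/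
theorem IsIwI_eq {G W B : Type} [Group G] [Group W]
    {M : CoxeterMatrix B} (D : IwahoriHeckeSetup G W B M) (b : B) (w : W) :
    (D.len ((D.cs.simple b : W) * w) = D.len w + 1 →
      IwI D.I D.π (D.cs.simple b : W) * IwI D.I D.π w =
        IwI D.I D.π ((D.cs.simple b : W) * w)) ∧
    (D.len ((D.cs.simple b : W) * w) + 1 = D.len w →
      IwI D.I D.π (D.cs.simple b : W) * IwI D.I D.π w =
        IwI D.I D.π w ∪ IwI D.I D.π ((D.cs.simple b : W) * w) ∧
      Disjoint (IwI D.I D.π w) (IwI D.I D.π ((D.cs.simple b : W) * w))) := by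
  constructor
  · exact D.prod_left b w
  · intro h
    have hsw : D.len ((D.cs.simple b : W) * ((D.cs.simple b : W) * w)) =
        D.len ((D.cs.simple b : W) * w) + 1 := by
      rw [← mul_assoc, D.simple_coe_mul_self, one_mul]
      omega
    have h1 := D.prod_left b ((D.cs.simple b : W) * w) hsw
    rw [← mul_assoc, D.simple_coe_mul_self, one_mul] at h1
    constructor
    · calc IwI D.I D.π (D.cs.simple b : W) * IwI D.I D.π w
          = IwI D.I D.π (D.cs.simple b : W) *
            (IwI D.I D.π (D.cs.simple b : W) * IwI D.I D.π ((D.cs.simple b : W) * w)) := by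
            rw [h1]
        _ = (IwI D.I D.π (D.cs.simple b : W) * IwI D.I D.π (D.cs.simple b : W)) *
            IwI D.I D.π ((D.cs.simple b : W) * w) := (mul_assoc _ _ _).symm
        _ = ((D.I : Set G) ∪ IwI D.I D.π (D.cs.simple b : W)) *
            IwI D.I D.π ((D.cs.simple b : W) * w) := by rw [D.CsCs b]
        _ = (D.I : Set G) * IwI D.I D.π ((D.cs.simple b : W) * w) ∪
            IwI D.I D.π (D.cs.simple b : W) * IwI D.I D.π ((D.cs.simple b : W) * w) :=
            Set.union_mul
        _ = IwI D.I D.π ((D.cs.simple b : W) * w) ∪ IwI D.I D.π w := by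
            rw [I_mul_IwI D.π, h1]
        _ = IwI D.I D.π w ∪ IwI D.I D.π ((D.cs.simple b : W) * w) := Set.union_comm _ _
    · apply D.T0_disjoint
      intro heq
      rw [← heq] at h
      omega
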